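/- If X ∈ ℝ^{m×p} is (c_x,γ_x)-SED away from agent i and Y ∈ ℝ^{n×m} is (c_y,γ_y)-SED, then the product XY is (N·c_x·c_y, γ)-SED away from agent i (and the same bound holds for YX when the dimensions are compatible), where γ = min(γ_x, γ_y). -/

import Mathlib

open Matrix

/-- Operator (induced l2) norm of a real matrix. -/
noncomputable def opNorm {α β : Type*} [Fintype α] [Fintype β] [DecidableEq β]
    (X : Matrix α β ℝ) : ℝ :=
  ‖LinearMap.toContinuousLinearMap (Matrix.toEuclideanLin X)‖

/-- Block `(l,j)` of a block-partitioned matrix. -/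
def blk {N : ℕ} {n m : Fin N → ℕ}
    (X : Matrix ((l : Fin N) × Fin (n l)) ((j : Fin N) × Fin (m j)) ℝ)
    (l j : Fin N) : Matrix (Fin (n l)) (Fin (m j)) ℝ :=
  fun a b => X ⟨l, a⟩ ⟨j, b⟩

/-- Block row of agent `i`. -/
def blkRow {N : ℕ} {n m : Fin N → ℕ}
    (K : Matrix ((l : Fin N) × Fin (m l)) ((j : Fin N) × Fin (n j)) ℝ)
    (i : Fin N) : Matrix (Fin (m i)) ((j : Fin N) × Fin (n j)) ℝ :=
  fun a b => K ⟨i, a⟩ b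

/-- Zero-padded version of a diagonal block. -/
def pad {N : ℕ} {n : Fin N → ℕ} (i : Fin N) (M : Matrix (Fin (n i)) (Fin (n i)) ℝ) :
    Matrix ((l : Fin N) × Fin (n l)) ((j : Fin N) × Fin (n j)) ℝ :=
  fun a b => if ha : a.1 = i then (if hb : b.1 = i then M (ha ▸ a.2) (hb ▸ b.2) else 0) else 0

/-- κ-truncation relative to agent `i`. -/
noncomputable def trunc {N : ℕ} {n m : Fin N → ℕ} (dist : Fin N → Fin N → ℝ) (i : Fin N) (κ : ℝ)
    (X : Matrix ((l : Fin N) × Fin (n l)) ((j : Fin N) × Fin (m j)) ℝ) :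
    Matrix ((l : Fin N) × Fin (n l)) ((j : Fin N) × Fin (m j)) ℝ :=
  fun a b => if max (dist i a.1) (dist i b.1) < κ then X a b else 0

/-- `X` is `(c,γ)`-spatially exponentially decaying. -/
def IsSED {N : ℕ} {n m : Fin N → ℕ} (dist : Fin N → Fin N → ℝ) (c γ : ℝ)
    (X : Matrix ((l : Fin N) × Fin (n l)) ((j : Fin N) × Fin (m j)) ℝ) : Prop :=
  ∀ l j : Fin N, opNorm (blk X l j) ≤ c * Real.exp (-γ * dist l j)

/-- `X` is `(c,γ)`-SED away from agent `i`. -/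
def IsSEDAway {N : ℕ} {n m : Fin N → ℕ} (dist : Fin N → Fin N → ℝ) (i : Fin N) (c γ : ℝ)
    (X : Matrix ((l : Fin N) × Fin (n l)) ((j : Fin N) × Fin (m j)) ℝ) : Prop :=
  ∀ l j : Fin N, opNorm (blk X l j) ≤ c * Real.exp (-γ * max (dist i l) (dist i j))

/-- `X` is `(τ,ρ)`-stable. -/
def IsStable {α : Type*} [Fintype α] [DecidableEq α] (τ ρ : ℝ) (X : Matrix α α ℝ) : Prop :=
  ∀ k : ℕ, opNorm (X ^ k) ≤ τ * Real.exp (-ρ * (k : ℝ))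


open scoped Matrix.Norms.L2Operator

lemma opNorm_eq_norm {α β : Type*} [Fintype α] [Fintype β] [DecidableEq β]
    (X : Matrix α β ℝ) : opNorm X = ‖X‖ := rfl

lemma blk_mul {N : ℕ} {n m r : Fin N → ℕ}
    (X : Matrix ((l : Fin N) × Fin (n l)) ((j : Fin N) × Fin (m j)) ℝ)
    (Y : Matrix ((l : Fin N) × Fin (m l)) ((j : Fin N) × Fin (r j)) ℝ)
    (l j : Fin N) : blk (X * Y) l j = ∑ k : Fin N, blk X l k * blk Y k j := by
  ext a b
  simp only [blk, Matrix.mul_apply, Finset.sum_apply, Matrix.sum_apply]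
  rw [← Finset.univ_sigma_univ, Finset.sum_sigma]

lemma opNorm_blk_mul_le {N : ℕ} {n m r : Fin N → ℕ}
    (X : Matrix ((l : Fin N) × Fin (n l)) ((j : Fin N) × Fin (m j)) ℝ)
    (Y : Matrix ((l : Fin N) × Fin (m l)) ((j : Fin N) × Fin (r j)) ℝ)
    (l j : Fin N) (bound : Fin N → ℝ)
    (h : ∀ k, opNorm (blk X l k) * opNorm (blk Y k j) ≤ bound k) :
    opNorm (blk (X * Y) l j) ≤ ∑ k : Fin N, bound k := by
  rw [blk_mul, opNorm_eq_norm]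
  refine le_trans (norm_sum_le _ _) (Finset.sum_le_sum fun k _ => ?_)
  refine le_trans (Matrix.l2_opNorm_mul _ _) ?_
  simpa only [opNorm_eq_norm] using h k

/-- Lemma 4: multiplying a matrix that is `(c_x,γ_x)`-SED away from agent `i`
by a `(c_y,γ_y)`-SED matrix (on the right, and likewise on the left when the dimensions are
compatible) yields a matrix that is `(N c_x c_y, min γ_x γ_y)`-SED away from agent `i`. -/
theorem SEDAway_mul_SED
    {N : ℕ} (p q r s : Fin N → ℕ) (dist : Fin N → Fin N → ℝ)
    (hdist_nonneg : ∀ l j, 0 ≤ dist l j)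
    (hdist_symm : ∀ l j, dist l j = dist j l)
    (hdist_tri : ∀ l j k, dist l j ≤ dist l k + dist k j)
    (i : Fin N) (cx cy γx γy : ℝ) (hγx : 0 ≤ γx) (hγy : 0 ≤ γy)
    (X : Matrix ((l : Fin N) × Fin (p l)) ((j : Fin N) × Fin (q j)) ℝ)
    (Y : Matrix ((l : Fin N) × Fin (q l)) ((j : Fin N) × Fin (r j)) ℝ)
    (Z : Matrix ((l : Fin N) × Fin (s l)) ((j : Fin N) × Fin (p j)) ℝ)
    (hX : IsSEDAway dist i cx γx X) (hY : IsSED dist cy γy Y)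
    (hZ : IsSED dist cy γy Z) :
    IsSEDAway dist i ((N : ℝ) * cx * cy) (min γx γy) (X * Y) ∧
    IsSEDAway dist i ((N : ℝ) * cx * cy) (min γx γy) (Z * X) := by

  have hγ : (0:ℝ) ≤ min γx γy := le_min hγx hγy
  constructor
  · intro l j
    have hcx : 0 ≤ cx := by
      have h0 : (0:ℝ) ≤ cx * Real.exp (-γx * max (dist i l) (dist i l)) :=
        le_trans (by rw [opNorm_eq_norm]; exact norm_nonneg _) (hX l l)
      exact (mul_nonneg_iff_of_pos_right (Real.exp_pos _)).mp h0
    have hcy : 0 ≤ cy := by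
      have h0 : (0:ℝ) ≤ cy * Real.exp (-γy * dist l l) :=
        le_trans (by rw [opNorm_eq_norm]; exact norm_nonneg _) (hY l l)
      exact (mul_nonneg_iff_of_pos_right (Real.exp_pos _)).mp h0
    have hsum := opNorm_blk_mul_le X Y l j
      (fun _ => cx * cy * Real.exp (-(min γx γy) * max (dist i l) (dist i j)))
      (fun k => by
        have h1 : max (dist i l) (dist i j) ≤ max (dist i l) (dist i k) + dist k j := by
          refine max_le (le_add_of_le_of_nonneg (le_max_left _ _) (hdist_nonneg _ _)) ?_
          exact le_trans (hdist_tri i j k) (add_le_add_left (le_max_right _ _) _)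
        have hM : 0 ≤ max (dist i l) (dist i k) :=
          le_trans (hdist_nonneg i l) (le_max_left _ _)
        have h2 : min γx γy * max (dist i l) (dist i j) ≤
            γx * max (dist i l) (dist i k) + γy * dist k j := by
          calc min γx γy * max (dist i l) (dist i j)
              ≤ min γx γy * (max (dist i l) (dist i k) + dist k j) :=
                mul_le_mul_of_nonneg_left h1 hγ
            _ = min γx γy * max (dist i l) (dist i k) + min γx γy * dist k j := mul_add _ _ _
            _ ≤ γx * max (dist i l) (dist i k) + γy * dist k j :=
                add_le_add (mul_le_mul_of_nonneg_right (min_le_left _ _) hM)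
                  (mul_le_mul_of_nonneg_right (min_le_right _ _) (hdist_nonneg _ _))
        calc opNorm (blk X l k) * opNorm (blk Y k j)
            ≤ (cx * Real.exp (-γx * max (dist i l) (dist i k))) *
              (cy * Real.exp (-γy * dist k j)) := by
              refine mul_le_mul (hX l k) (hY k j) ?_ (mul_nonneg hcx (Real.exp_pos _).le)
              rw [opNorm_eq_norm]; exact norm_nonneg _
          _ = cx * cy * Real.exp (-γx * max (dist i l) (dist i k) + -γy * dist k j) := by
              rw [Real.exp_add]; ring
          _ ≤ cx * cy * Real.exp (-(min γx γy) * max (dist i l) (dist i j)) := by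
              refine mul_le_mul_of_nonneg_left (Real.exp_le_exp.mpr (by linarith)) ?_
              exact mul_nonneg hcx hcy)
    calc opNorm (blk (X * Y) l j)
        ≤ ∑ _k : Fin N, cx * cy * Real.exp (-(min γx γy) * max (dist i l) (dist i j)) := hsum
      _ = (N : ℝ) * cx * cy * Real.exp (-(min γx γy) * max (dist i l) (dist i j)) := by
          rw [Finset.sum_const, Finset.card_univ, Fintype.card_fin, nsmul_eq_mul]; ring
  · intro l j
    have hcx : 0 ≤ cx := by
      have h0 : (0:ℝ) ≤ cx * Real.exp (-γx * max (dist i l) (dist i l)) :=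
        le_trans (by rw [opNorm_eq_norm]; exact norm_nonneg _) (hX l l)
      exact (mul_nonneg_iff_of_pos_right (Real.exp_pos _)).mp h0
    have hcy : 0 ≤ cy := by
      have h0 : (0:ℝ) ≤ cy * Real.exp (-γy * dist l l) :=
        le_trans (by rw [opNorm_eq_norm]; exact norm_nonneg _) (hZ l l)
      exact (mul_nonneg_iff_of_pos_right (Real.exp_pos _)).mp h0
    have hsum := opNorm_blk_mul_le Z X l j
      (fun _ => cx * cy * Real.exp (-(min γx γy) * max (dist i l) (dist i j)))
      (fun k => by
        have h1 : max (dist i l) (dist i j) ≤ dist l k + max (dist i k) (dist i j) := by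
          refine max_le ?_ (le_add_of_nonneg_of_le (hdist_nonneg _ _) (le_max_right _ _))
          calc dist i l ≤ dist i k + dist k l := hdist_tri i l k
            _ = dist l k + dist i k := by rw [hdist_symm k l]; ring
            _ ≤ dist l k + max (dist i k) (dist i j) := add_le_add_right (le_max_left _ _) _
        have hM : 0 ≤ max (dist i k) (dist i j) :=
          le_trans (hdist_nonneg i k) (le_max_left _ _)
        have h2 : min γx γy * max (dist i l) (dist i j) ≤
            γy * dist l k + γx * max (dist i k) (dist i j) := by
          calc min γx γy * max (dist i l) (dist i j)
              ≤ min γx γy * (dist l k + max (dist i k) (dist i j)) :=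
                mul_le_mul_of_nonneg_left h1 hγ
            _ = min γx γy * dist l k + min γx γy * max (dist i k) (dist i j) := mul_add _ _ _
            _ ≤ γy * dist l k + γx * max (dist i k) (dist i j) :=
                add_le_add (mul_le_mul_of_nonneg_right (min_le_right _ _) (hdist_nonneg _ _))
                  (mul_le_mul_of_nonneg_right (min_le_left _ _) hM)
        calc opNorm (blk Z l k) * opNorm (blk X k j)
            ≤ (cy * Real.exp (-γy * dist l k)) *
              (cx * Real.exp (-γx * max (dist i k) (dist i j))) := by
              refine mul_le_mul (hZ l k) (hX k j) ?_ (mul_nonneg hcy (Real.exp_pos _).le)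
              rw [opNorm_eq_norm]; exact norm_nonneg _
          _ = cx * cy * Real.exp (-γy * dist l k + -γx * max (dist i k) (dist i j)) := by
              rw [Real.exp_add]; ring
          _ ≤ cx * cy * Real.exp (-(min γx γy) * max (dist i l) (dist i j)) := by
              refine mul_le_mul_of_nonneg_left (Real.exp_le_exp.mpr (by linarith)) ?_
              exact mul_nonneg hcx hcy)
    calc opNorm (blk (Z * X) l j)
        ≤ ∑ _k : Fin N, cx * cy * Real.exp (-(min γx γy) * max (dist i l) (dist i j)) := hsum
      _ = (N : ℝ) * cx * cy * Real.exp (-(min γx γy) * max (dist i l) (dist i j)) := by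
          rw [Finset.sum_const, Finset.card_univ, Fintype.card_fin, nsmul_eq_mul]; ring
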